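/- Let R = R1 × R2 be a decomposable commutative ring. Then every nonzero weakly prime element of R is prime. -/
import Mathlib


theorem weakly_prime_in_product_is_prime {R₁ R₂ : Type*} [CommRing R₁] [CommRing R₂]
    [Nontrivial R₁] [Nontrivial R₂] (p : R₁ × R₂)
    (hp0 : p ≠ 0) (hpu : ¬IsUnit p)
    (hwp : ∀ a b : R₁ × R₂, p ∣ a * b → a * b ≠ 0 → p ∣ a ∨ p ∣ b) :
    Prime p := by
  -- key lemma: if a*b = 0 and p divides neither, then p*a = 0
  have key : ∀ a b : R₁ × R₂, a * b = 0 → ¬ p ∣ a → ¬ p ∣ b → p * a = 0 := by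
    intro a b hab ha hb
    by_contra hpa
    have h1 : a * (p + b) = p * a := by
      have h' : a * (p + b) = p * a + a * b := by ring
      rw [h', hab, add_zero]
    have h2 : p ∣ a * (p + b) := by rw [h1]; exact Dvd.intro a rfl
    have := hwp a (p + b) h2 (by rw [h1]; exact hpa)
    rcases this with h | h
    · exact ha h
    · exact hb ((dvd_add_right (dvd_refl p)).mp h)
  refine ⟨hp0, hpu, ?_⟩
  intro a b hab
  by_cases h0 : a * b = 0
  · by_contra hcon
    push_neg at hcon
    obtain ⟨ha, hb⟩ := hcon
    have hpa : p * a = 0 := key a b h0 ha hb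
    have hpb : p * b = 0 := key b a (by rwa [mul_comm]) hb ha
    -- p * p = 0
    have hpp : p * p = 0 := by
      by_contra hpp
      have h1 : (p + a) * (p + b) = p * p := by
        have : (p + a) * (p + b) = p * p + p * b + p * a + a * b := by ring
        rw [this, hpa, hpb, h0]; ring
      have h2 : p ∣ (p + a) * (p + b) := by rw [h1]; exact Dvd.intro p rfl
      rcases hwp _ _ h2 (by rw [h1]; exact hpp) with h | h
      · exact ha ((dvd_add_right (dvd_refl p)).mp h)
      · exact hb ((dvd_add_right (dvd_refl p)).mp h)
    -- now use the product structure
    have hef : ((1, 0) : R₁ × R₂) * (0, 1) = 0 := by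
      ext <;> simp
    by_cases he : p ∣ ((1, 0) : R₁ × R₂)
    · obtain ⟨c, hc⟩ := he
      have h1 : (1 : R₁) = p.1 * c.1 := congrArg Prod.fst hc
      have h2 : p.1 * p.1 = 0 := congrArg Prod.fst hpp
      have : (1 : R₁) = 0 := by
        calc (1 : R₁) = (p.1 * c.1) * (p.1 * c.1) := by rw [← h1]; ring
        _ = (p.1 * p.1) * (c.1 * c.1) := by ring
        _ = 0 := by rw [h2]; ring
      exact one_ne_zero this
    by_cases hf : p ∣ ((0, 1) : R₁ × R₂)
    · obtain ⟨c, hc⟩ := hf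
      have h1 : (1 : R₂) = p.2 * c.2 := congrArg Prod.snd hc
      have h2 : p.2 * p.2 = 0 := congrArg Prod.snd hpp
      have : (1 : R₂) = 0 := by
        calc (1 : R₂) = (p.2 * c.2) * (p.2 * c.2) := by rw [← h1]; ring
        _ = (p.2 * p.2) * (c.2 * c.2) := by ring
        _ = 0 := by rw [h2]; ring
      exact one_ne_zero this
    · have h1 : p * (1, 0) = 0 := key _ _ hef he hf
      have h2 : p * (0, 1) = 0 := key _ _ (by rw [mul_comm]; exact hef) hf he
      apply hp0
      have e1 : p.1 = 0 := by simpa using congrArg Prod.fst h1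
      have e2 : p.2 = 0 := by simpa using congrArg Prod.snd h2
      ext <;> simp [e1, e2]
  · exact hwp a b hab h0
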